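/- arXiv:1101.0947 — 2 statements merged into one kernel-verified Lean document; each statement's English description precedes it below -/
import Mathlib

section
/- Let F_1,…,F_m and G_1,…,G_m be Borel probability measures on ℝ with finite second moments, and let π_1,…,π_m ≥ 0 with Σ_{i=1}^m π_i = 1. Then the squared Mallows distance of the mixtures satisfies ρ_M²(Σ_{i=1}^m π_i F_i, Σ_{i=1}^m π_i G_i) ≤ Σ_{i=1}^m π_i ρ_M²(F_i, G_i). -/
open MeasureTheory

/-- The squared Mallows (Wasserstein-2) distance between two Borel probability
measures on `ℝ`: the infimum of `E (W - V)^2` over all couplings. -/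
noncomputable def mallowsDistSq (F G : Measure ℝ) : ℝ :=
  sInf { r : ℝ | ∃ μ : Measure (ℝ × ℝ), IsProbabilityMeasure μ ∧
    μ.map Prod.fst = F ∧ μ.map Prod.snd = G ∧ r = ∫ p, (p.1 - p.2) ^ 2 ∂μ }

lemma couplingSet_nonneg {F G : Measure ℝ} {r : ℝ}
    (hr : r ∈ { r : ℝ | ∃ μ : Measure (ℝ × ℝ), IsProbabilityMeasure μ ∧
      μ.map Prod.fst = F ∧ μ.map Prod.snd = G ∧ r = ∫ p, (p.1 - p.2) ^ 2 ∂μ }) : 0 ≤ r := by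
  obtain ⟨μ, _, _, _, rfl⟩ := hr
  exact integral_nonneg fun p => sq_nonneg _

lemma couplingSet_nonempty (F G : Measure ℝ) [IsProbabilityMeasure F] [IsProbabilityMeasure G] :
    ({ r : ℝ | ∃ μ : Measure (ℝ × ℝ), IsProbabilityMeasure μ ∧
      μ.map Prod.fst = F ∧ μ.map Prod.snd = G ∧ r = ∫ p, (p.1 - p.2) ^ 2 ∂μ }).Nonempty := by
  refine ⟨_, F.prod G, inferInstance, ?_, ?_, rfl⟩ <;>
    simp [Measure.map_fst_prod, Measure.map_snd_prod]

lemma integrable_sq_sub {F G : Measure ℝ} [IsProbabilityMeasure F] [IsProbabilityMeasure G]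
    (hF2 : Integrable (fun x : ℝ => x ^ 2) F) (hG2 : Integrable (fun x : ℝ => x ^ 2) G)
    {μ : Measure (ℝ × ℝ)} (h1 : μ.map Prod.fst = F) (h2 : μ.map Prod.snd = G) :
    Integrable (fun p : ℝ × ℝ => (p.1 - p.2) ^ 2) μ := by
  have hf1 : Integrable (fun p : ℝ × ℝ => p.1 ^ 2) μ := by
    rw [← h1] at hF2
    exact (integrable_map_measure (measurable_id.pow_const 2).aestronglyMeasurable
      measurable_fst.aemeasurable).mp hF2
  have hf2 : Integrable (fun p : ℝ × ℝ => p.2 ^ 2) μ := by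
    rw [← h2] at hG2
    exact (integrable_map_measure (measurable_id.pow_const 2).aestronglyMeasurable
      measurable_snd.aemeasurable).mp hG2
  refine Integrable.mono' ((hf1.const_mul 2).add (hf2.const_mul 2))
    (((measurable_fst.sub measurable_snd).pow_const 2).aestronglyMeasurable) ?_
  filter_upwards with p
  simp only [Pi.add_apply, Real.norm_eq_abs, abs_of_nonneg (sq_nonneg (p.1 - p.2))]
  nlinarith [sq_nonneg (p.1 + p.2)]

lemma map_finset_sum_measure {α β ι : Type*} [MeasurableSpace α] [MeasurableSpace β] {f : α → β}
    (hf : Measurable f) (s : Finset ι) (μ : ι → Measure α) :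
    (∑ i ∈ s, μ i).map f = ∑ i ∈ s, (μ i).map f := by
  induction s using Finset.cons_induction with
  | empty => simp
  | cons a s ha ih => rw [Finset.sum_cons, Finset.sum_cons, Measure.map_add _ _ hf, ih]

/-- For probability measures `F₁,…,F_m` and `G₁,…,G_m` on `ℝ` with finite
second moments and weights `π_i ≥ 0` summing to `1`, the squared Mallows distance of the
mixtures satisfies `ρ_M²(Σ π_i F_i, Σ π_i G_i) ≤ Σ π_i ρ_M²(F_i, G_i)`. -/
theorem mallows_mixture_ineq (m : ℕ) (F G : Fin m → Measure ℝ)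
    (hF : ∀ i, IsProbabilityMeasure (F i)) (hG : ∀ i, IsProbabilityMeasure (G i))
    (hF2 : ∀ i, Integrable (fun x : ℝ => x ^ 2) (F i))
    (hG2 : ∀ i, Integrable (fun x : ℝ => x ^ 2) (G i))
    (π : Fin m → ℝ) (hπ : ∀ i, 0 ≤ π i) (hπ1 : ∑ i, π i = 1) :
    mallowsDistSq (∑ i, ENNReal.ofReal (π i) • F i) (∑ i, ENNReal.ofReal (π i) • G i)
      ≤ ∑ i, π i * mallowsDistSq (F i) (G i) := by
  apply le_of_forall_pos_le_add
  intro ε hε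
  have hμi : ∀ i : Fin m, ∃ ν : Measure (ℝ × ℝ), IsProbabilityMeasure ν ∧
      ν.map Prod.fst = F i ∧ ν.map Prod.snd = G i ∧
      ∫ p, (p.1 - p.2) ^ 2 ∂ν < mallowsDistSq (F i) (G i) + ε := by
    intro i
    haveI := hF i; haveI := hG i
    obtain ⟨r, hr, hlt⟩ := Real.lt_sInf_add_pos (couplingSet_nonempty (F i) (G i)) hε
    obtain ⟨ν, hp, hf, hg, rfl⟩ := hr
    exact ⟨ν, hp, hf, hg, hlt⟩
  choose ν hνp hνf hνg hνlt using hμi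
  haveI := hνp
  have hint : ∀ i, Integrable (fun p : ℝ × ℝ => (p.1 - p.2) ^ 2) (ν i) := fun i => by
    haveI := hF i; haveI := hG i
    exact integrable_sq_sub (hF2 i) (hG2 i) (hνf i) (hνg i)
  set μ : Measure (ℝ × ℝ) := ∑ i, ENNReal.ofReal (π i) • ν i with hμ
  have hmem : (∑ i, π i * ∫ p, (p.1 - p.2) ^ 2 ∂ν i) ∈
      { r : ℝ | ∃ μ : Measure (ℝ × ℝ), IsProbabilityMeasure μ ∧
        μ.map Prod.fst = ∑ i, ENNReal.ofReal (π i) • F i ∧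
        μ.map Prod.snd = ∑ i, ENNReal.ofReal (π i) • G i ∧
        r = ∫ p, (p.1 - p.2) ^ 2 ∂μ } := by
    refine ⟨μ, ?_, ?_, ?_, ?_⟩
    · constructor
      simp only [hμ, Measure.finset_sum_apply, Measure.smul_apply, measure_univ,
        smul_eq_mul, mul_one]
      rw [← ENNReal.ofReal_sum_of_nonneg (fun i _ => hπ i), hπ1, ENNReal.ofReal_one]
    · rw [hμ, map_finset_sum_measure measurable_fst]
      exact Finset.sum_congr rfl fun i _ => by rw [Measure.map_smul, hνf i]
    · rw [hμ, map_finset_sum_measure measurable_snd]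
      exact Finset.sum_congr rfl fun i _ => by rw [Measure.map_smul, hνg i]
    · rw [hμ, integral_finset_sum_measure
        (fun i _ => (hint i).smul_measure ENNReal.ofReal_ne_top)]
      exact Finset.sum_congr rfl fun i _ => by
        rw [integral_smul_measure, ENNReal.toReal_ofReal (hπ i), smul_eq_mul]
  have hle := csInf_le ⟨0, fun r hr => couplingSet_nonneg hr⟩ hmem
  refine hle.trans ?_
  calc (∑ i, π i * ∫ p, (p.1 - p.2) ^ 2 ∂ν i)
      ≤ ∑ i, π i * (mallowsDistSq (F i) (G i) + ε) :=
        Finset.sum_le_sum fun i _ => mul_le_mul_of_nonneg_left (hνlt i).le (hπ i)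
    _ = ∑ i, π i * mallowsDistSq (F i) (G i) + ε := by
        simp only [mul_add, Finset.sum_add_distrib, ← Finset.sum_mul, hπ1, one_mul]
end

section
/- Let F_1,…,F_m and G_1,…,G_m be Borel probability measures on ℝ with finite second moments such that F_i and G_i have equal means for each i = 1,…,m, and let F = F_1 * ⋯ * F_m and G = G_1 * ⋯ * G_m be the corresponding convolutions (i.e., F is the distribution of a sum of m independent random variables with laws F_1,…,F_m, and similarly for G). Then ρ_M²(F, G) ≤ Σ_{i=1}^m ρ_M²(F_i, G_i). -/
open MeasureTheory Set

/-- Auxiliary: a product of integrable functions, each in one coordinate, is integrable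
with respect to a finite product of (sigma-finite) measures. -/
lemma my_integrable_pi_prod {n : ℕ} {α : Type*} [MeasurableSpace α]
    (μ : Fin n → Measure α) [∀ i, SigmaFinite (μ i)]
    (f : Fin n → α → ℝ) (hf : ∀ i, Integrable (f i) (μ i)) :
    Integrable (fun x => ∏ i, f i (x i)) (Measure.pi μ) := by
  induction n with
  | zero =>
      simp only [Finset.univ_eq_empty, Finset.prod_empty]
      rw [Measure.pi_of_empty]
      exact integrable_const 1
  | succ n ih =>
      have h := ((measurePreserving_piFinSuccAbove μ 0).symm)
      rw [← h.integrable_comp_emb (MeasurableEquiv.measurableEmbedding _)]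
      simp_rw [MeasurableEquiv.piFinSuccAbove_symm_apply, Fin.insertNthEquiv,
        Fin.prod_univ_succ, Fin.insertNth_zero, Equiv.coe_fn_mk, Function.comp_def,
        Fin.zero_succAbove, Fin.cons_zero, Fin.cons_succ]
      exact (hf 0).mul_prod (ih _ _ fun i => hf i.succ)

/-- Auxiliary: Fubini for a product of functions of single coordinates, general measures. -/
lemma my_integral_pi_prod {n : ℕ} {α : Type*} [MeasurableSpace α]
    (μ : Fin n → Measure α) [∀ i, SigmaFinite (μ i)] (f : Fin n → α → ℝ) :
    ∫ x, ∏ i, f i (x i) ∂Measure.pi μ = ∏ i, ∫ a, f i a ∂μ i := by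
  induction n with
  | zero =>
      simp only [Finset.univ_eq_empty, Finset.prod_empty]
      rw [Measure.pi_of_empty]
      simp
  | succ n ih =>
      calc ∫ x, ∏ i, f i (x i) ∂Measure.pi μ
          = ∫ p : α × (Fin n → α), f 0 p.1 * ∏ i : Fin n, f i.succ (p.2 i)
              ∂((μ 0).prod (Measure.pi fun i => μ ((0 : Fin (n+1)).succAbove i))) := by
            rw [← ((measurePreserving_piFinSuccAbove μ 0).symm).integral_comp']
            simp_rw [MeasurableEquiv.piFinSuccAbove_symm_apply, Fin.insertNthEquiv,
              Fin.prod_univ_succ, Fin.insertNth_zero, Equiv.coe_fn_mk, cast_eq,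
              Fin.zero_succAbove, Fin.cons_zero, Fin.cons_succ]
        _ = (∫ a, f 0 a ∂μ 0) * ∏ i : Fin n, ∫ a, f i.succ a ∂μ i.succ := by
            rw [integral_prod_mul (f := fun a => f 0 a)
                (g := fun y : Fin n → α => ∏ i, f i.succ (y i)),
              ih _ fun i => f i.succ]
            simp [Fin.zero_succAbove]
        _ = ∏ i, ∫ a, f i a ∂μ i := (Fin.prod_univ_succ fun i => ∫ a, f i a ∂μ i).symm

/-- Auxiliary: the pushforward of a product measure under a coordinatewise map
is the product of the pushforwards. -/
lemma my_pi_map_piMap {ι : Type*} [Fintype ι] {α β : ι → Type*} [∀ i, MeasurableSpace (α i)]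
    [∀ i, MeasurableSpace (β i)] (μ : ∀ i, Measure (α i)) [∀ i, IsProbabilityMeasure (μ i)]
    (g : ∀ i, α i → β i) (hg : ∀ i, Measurable (g i)) :
    (Measure.pi μ).map (fun x i => g i (x i)) = Measure.pi (fun i => (μ i).map (g i)) := by
  haveI : ∀ i, IsProbabilityMeasure ((μ i).map (g i)) :=
    fun i => Measure.isProbabilityMeasure_map (hg i).aemeasurable
  refine (Measure.pi_eq fun s hs => ?_).symm
  have hG : Measurable fun (x : ∀ i, α i) i => g i (x i) :=
    measurable_pi_lambda _ fun i => (hg i).comp (measurable_pi_apply i)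
  rw [Measure.map_apply hG (MeasurableSet.univ_pi hs)]
  have : (fun (x : ∀ i, α i) i => g i (x i)) ⁻¹' Set.pi Set.univ s
      = Set.pi Set.univ (fun i => g i ⁻¹' s i) := by
    ext x; simp [Set.mem_pi]
  rw [this, Measure.pi_pi]
  exact Finset.prod_congr rfl fun i _ => (Measure.map_apply (hg i) (hs i)).symm

/-- Auxiliary: second moment of a sum of independent centered square-integrable random
variables (coordinates of a product measure) is the sum of the second moments. -/
lemma my_integral_pi_sum_sq {n : ℕ} {α : Type*} [MeasurableSpace α]
    (μ : Fin n → Measure α) [∀ i, IsProbabilityMeasure (μ i)]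
    (f : Fin n → α → ℝ)
    (hint : ∀ i, Integrable (f i) (μ i)) (hsq : ∀ i, Integrable (fun a => f i a ^ 2) (μ i))
    (h0 : ∀ i, ∫ a, f i a ∂μ i = 0) :
    ∫ x, (∑ i, f i (x i)) ^ 2 ∂Measure.pi μ = ∑ i, ∫ a, f i a ^ 2 ∂μ i := by
  classical
  set g : Fin n → Fin n → Fin n → α → ℝ :=
    fun i j k a => (if k = i then f i a else 1) * (if k = j then f j a else 1) with hg
  have hprod : ∀ i j (x : Fin n → α), (∏ k, g i j k (x k)) = f i (x i) * f j (x j) := by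
    intro i j x
    simp only [hg, Finset.prod_mul_distrib]
    congr 1
    · simpa using Finset.prod_ite_eq' Finset.univ i (fun k => f i (x k))
    · simpa using Finset.prod_ite_eq' Finset.univ j (fun k => f j (x k))
  have hgint : ∀ i j k, Integrable (g i j k) (μ k) := by
    intro i j k
    by_cases hki : k = i <;> by_cases hkj : k = j
    · subst hki; subst hkj
      simpa [hg, pow_two] using hsq k
    · subst hki
      simpa [hg, hkj] using hint k
    · subst hkj
      simpa [hg, hki] using hint k
    · simpa [hg, hki, hkj] using integrable_const (E := ℝ) (μ := μ k) 1
  have hrw : (fun x : Fin n → α => (∑ i, f i (x i)) ^ 2)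
      = fun x => ∑ i, ∑ j, ∏ k, g i j k (x k) := by
    funext x
    rw [sq, Finset.sum_mul_sum]
    exact Finset.sum_congr rfl fun i _ =>
      Finset.sum_congr rfl fun j _ => (hprod i j x).symm
  rw [hrw, integral_finset_sum _ (fun i _ => integrable_finset_sum _ fun j _ =>
    my_integrable_pi_prod μ _ (hgint i j))]
  refine Finset.sum_congr rfl fun i _ => ?_
  rw [integral_finset_sum _ (fun j _ => my_integrable_pi_prod μ _ (hgint i j))]
  have hval : ∀ j, ∫ x, ∏ k, g i j k (x k) ∂Measure.pi μ = ∏ k, ∫ a, g i j k a ∂μ k :=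
    fun j => my_integral_pi_prod μ _
  rw [Finset.sum_eq_single i]
  · rw [hval i]
    have : ∀ k, ∫ a, g i i k a ∂μ k = if k = i then ∫ a, f i a ^ 2 ∂μ i else 1 := by
      intro k
      by_cases hki : k = i
      · subst hki
        simp [hg, pow_two]
      · simp [hg, hki]
    rw [Finset.prod_congr rfl fun k _ => this k]
    simpa using Finset.prod_ite_eq' Finset.univ i (fun _ => ∫ a, f i a ^ 2 ∂μ i)
  · intro j _ hji
    rw [hval j]
    refine Finset.prod_eq_zero (Finset.mem_univ i) ?_
    have : g i j i = fun a => f i a := by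
      funext a
      simp [hg, (Ne.symm hji : ¬ i = j)]
    rw [this, h0 i]
  · intro h
    exact absurd (Finset.mem_univ i) h

/-- The convolution `F₁ * ⋯ * F_m`: the pushforward of the product measure
`F₁ ⊗ ⋯ ⊗ F_m` under the addition map `(x₁,…,x_m) ↦ x₁ + ⋯ + x_m`. -/
noncomputable def convolutionOf (m : ℕ) (F : Fin m → Measure ℝ) : Measure ℝ :=
  (Measure.pi F).map fun x => ∑ i, x i

/-- If `F_i` and `G_i` are probability measures on `ℝ` with finite second
moments and equal means for each `i`, then the squared Mallows distance of the convolutions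
satisfies `ρ_M²(F₁ * ⋯ * F_m, G₁ * ⋯ * G_m) ≤ Σ_i ρ_M²(F_i, G_i)`. -/
theorem mallows_convolution_ineq (m : ℕ) (F G : Fin m → Measure ℝ)
    (hF : ∀ i, IsProbabilityMeasure (F i)) (hG : ∀ i, IsProbabilityMeasure (G i))
    (hF2 : ∀ i, Integrable (fun x : ℝ => x ^ 2) (F i))
    (hG2 : ∀ i, Integrable (fun x : ℝ => x ^ 2) (G i))
    (hmean : ∀ i, ∫ x, x ∂(F i) = ∫ x, x ∂(G i)) :
    mallowsDistSq (convolutionOf m F) (convolutionOf m G)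
      ≤ ∑ i, mallowsDistSq (F i) (G i) := by
  classical
  haveI := hF; haveI := hG
  refine le_of_forall_sub_le fun ε hε => ?_
  rw [sub_le_iff_le_add]
  set ε' : ℝ := ε / (m + 1) with hε'
  have hε'pos : 0 < ε' := by positivity
  -- choose near-optimal couplings
  have key : ∀ i, ∃ μi : Measure (ℝ × ℝ), IsProbabilityMeasure μi ∧
      μi.map Prod.fst = F i ∧ μi.map Prod.snd = G i ∧
      (∫ p, (p.1 - p.2) ^ 2 ∂μi) < mallowsDistSq (F i) (G i) + ε' := by
    intro i
    have hne : Set.Nonempty { r : ℝ | ∃ μ : Measure (ℝ × ℝ), IsProbabilityMeasure μ ∧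
        μ.map Prod.fst = F i ∧ μ.map Prod.snd = G i ∧ r = ∫ p, (p.1 - p.2) ^ 2 ∂μ } :=
      ⟨_, (F i).prod (G i), inferInstance, by simp [Measure.map_fst_prod],
        by simp [Measure.map_snd_prod], rfl⟩
    obtain ⟨r, hr, hlt⟩ := Real.lt_sInf_add_pos hne hε'pos
    obtain ⟨μi, h1, h2, h3, h4⟩ := hr
    exact ⟨μi, h1, h2, h3, by rw [← h4]; exact hlt⟩
  choose μ hprob hfst hsnd hlt using key
  haveI := hprob
  -- integrability facts for the couplings
  have hpm : Measurable fun x : ℝ => x ^ 2 := by fun_prop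
  have hfst2 : ∀ i, Integrable (fun p : ℝ × ℝ => p.1 ^ 2) (μ i) := by
    intro i
    have h := hF2 i
    rw [← hfst i, integrable_map_measure (hpm.aestronglyMeasurable)
      measurable_fst.aemeasurable] at h
    simpa [Function.comp_def] using h
  have hsnd2 : ∀ i, Integrable (fun p : ℝ × ℝ => p.2 ^ 2) (μ i) := by
    intro i
    have h := hG2 i
    rw [← hsnd i, integrable_map_measure (hpm.aestronglyMeasurable)
      measurable_snd.aemeasurable] at h
    simpa [Function.comp_def] using h
  have hm1 : ∀ i, MemLp (fun p : ℝ × ℝ => p.1) 2 (μ i) := fun i =>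
    (memLp_two_iff_integrable_sq measurable_fst.aestronglyMeasurable).2 (hfst2 i)
  have hm2 : ∀ i, MemLp (fun p : ℝ × ℝ => p.2) 2 (μ i) := fun i =>
    (memLp_two_iff_integrable_sq measurable_snd.aestronglyMeasurable).2 (hsnd2 i)
  have hfmem : ∀ i, MemLp (fun p : ℝ × ℝ => p.1 - p.2) 2 (μ i) := fun i => (hm1 i).sub (hm2 i)
  have hfint : ∀ i, Integrable (fun p : ℝ × ℝ => p.1 - p.2) (μ i) := fun i =>
    (hfmem i).integrable one_le_two
  have hfsq : ∀ i, Integrable (fun p : ℝ × ℝ => (p.1 - p.2) ^ 2) (μ i) := fun i =>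
    (hfmem i).integrable_sq
  -- the couplings are centered
  have hmean1 : ∀ i, ∫ p : ℝ × ℝ, p.1 ∂μ i = ∫ x, x ∂F i := by
    intro i
    rw [← hfst i,
      integral_map (f := fun x : ℝ => x) measurable_fst.aemeasurable aestronglyMeasurable_id]
  have hmean2 : ∀ i, ∫ p : ℝ × ℝ, p.2 ∂μ i = ∫ x, x ∂G i := by
    intro i
    rw [← hsnd i,
      integral_map (f := fun x : ℝ => x) measurable_snd.aemeasurable aestronglyMeasurable_id]
  have hzero : ∀ i, ∫ p : ℝ × ℝ, (p.1 - p.2) ∂μ i = 0 := by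
    intro i
    rw [integral_sub ((hm1 i).integrable one_le_two) ((hm2 i).integrable one_le_two),
      hmean1 i, hmean2 i, hmean i, sub_self]
  -- the big coupling
  have hTm : Measurable fun x : Fin m → ℝ × ℝ => ((∑ i, (x i).1, ∑ i, (x i).2) : ℝ × ℝ) := by
    fun_prop
  set ν : Measure (ℝ × ℝ) :=
    (Measure.pi μ).map (fun x => (∑ i, (x i).1, ∑ i, (x i).2)) with hν
  haveI : IsProbabilityMeasure ν := Measure.isProbabilityMeasure_map hTm.aemeasurable
  have hsum : Measurable fun y : Fin m → ℝ => ∑ i, y i := by fun_prop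
  have hmapfst : Measurable fun (x : Fin m → ℝ × ℝ) (i : Fin m) => (x i).1 :=
    measurable_pi_lambda _ fun i => (measurable_pi_apply i).fst
  have hmapsnd : Measurable fun (x : Fin m → ℝ × ℝ) (i : Fin m) => (x i).2 :=
    measurable_pi_lambda _ fun i => (measurable_pi_apply i).snd
  have hfstν : ν.map Prod.fst = convolutionOf m F := by
    rw [hν, Measure.map_map measurable_fst hTm]
    have h1 : (Prod.fst ∘ fun x : Fin m → ℝ × ℝ => ((∑ i, (x i).1, ∑ i, (x i).2) : ℝ × ℝ))
        = (fun y : Fin m → ℝ => ∑ i, y i) ∘ (fun x (i : Fin m) => (x i).1) := rfl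
    rw [h1, ← Measure.map_map hsum hmapfst,
      my_pi_map_piMap μ (fun _ => Prod.fst) (fun _ => measurable_fst)]
    have h2 : (fun i => (μ i).map Prod.fst) = F := funext hfst
    rw [h2]; rfl
  have hsndν : ν.map Prod.snd = convolutionOf m G := by
    rw [hν, Measure.map_map measurable_snd hTm]
    have h1 : (Prod.snd ∘ fun x : Fin m → ℝ × ℝ => ((∑ i, (x i).1, ∑ i, (x i).2) : ℝ × ℝ))
        = (fun y : Fin m → ℝ => ∑ i, y i) ∘ (fun x (i : Fin m) => (x i).2) := rfl
    rw [h1, ← Measure.map_map hsum hmapsnd,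
      my_pi_map_piMap μ (fun _ => Prod.snd) (fun _ => measurable_snd)]
    have h2 : (fun i => (μ i).map Prod.snd) = G := funext hsnd
    rw [h2]; rfl
  -- compute the cost of the big coupling
  have hI : ∫ p : ℝ × ℝ, (p.1 - p.2) ^ 2 ∂ν = ∑ i, ∫ p : ℝ × ℝ, (p.1 - p.2) ^ 2 ∂μ i := by
    rw [hν, integral_map (f := fun p : ℝ × ℝ => (p.1 - p.2) ^ 2) hTm.aemeasurable
      (((measurable_fst.sub measurable_snd).pow_const 2).aestronglyMeasurable)]
    have h1 : (fun x : Fin m → ℝ × ℝ => ((∑ i, (x i).1) - ∑ i, (x i).2) ^ 2)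
        = fun x => (∑ i, ((x i).1 - (x i).2)) ^ 2 := by
      funext x
      rw [Finset.sum_sub_distrib]
    rw [show (fun x : Fin m → ℝ × ℝ =>
        (((∑ i, (x i).1, ∑ i, (x i).2) : ℝ × ℝ).1 - ((∑ i, (x i).1, ∑ i, (x i).2) : ℝ × ℝ).2) ^ 2)
      = fun x => (∑ i, ((x i).1 - (x i).2)) ^ 2 from h1]
    exact my_integral_pi_sum_sq μ (fun _ p => p.1 - p.2) hfint hfsq hzero
  -- conclude
  have hle : mallowsDistSq (convolutionOf m F) (convolutionOf m G)
      ≤ ∫ p : ℝ × ℝ, (p.1 - p.2) ^ 2 ∂ν := by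
    apply csInf_le
    · refine ⟨0, fun r hr => ?_⟩
      obtain ⟨κ, _, _, _, rfl⟩ := hr
      exact integral_nonneg fun p => sq_nonneg _
    · exact ⟨ν, inferInstance, hfstν, hsndν, rfl⟩
  have hsum_lt : ∑ i, ∫ p : ℝ × ℝ, (p.1 - p.2) ^ 2 ∂μ i
      ≤ ∑ i, (mallowsDistSq (F i) (G i) + ε') :=
    Finset.sum_le_sum fun i _ => (hlt i).le
  have hfinal : (m : ℝ) * ε' ≤ ε := by
    rw [hε', eq_comm] at *
    have hm1 : (0 : ℝ) < (m : ℝ) + 1 := by positivity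
    rw [div_eq_iff hm1.ne'] at *
    have : (m : ℝ) ≤ (m : ℝ) + 1 := by linarith
    calc (m : ℝ) * (ε / ((m : ℝ) + 1)) ≤ ((m : ℝ) + 1) * (ε / ((m : ℝ) + 1)) :=
          mul_le_mul_of_nonneg_right this (by positivity)
      _ = ε := by field_simp
  calc mallowsDistSq (convolutionOf m F) (convolutionOf m G)
      ≤ ∫ p : ℝ × ℝ, (p.1 - p.2) ^ 2 ∂ν := hle
    _ = ∑ i, ∫ p : ℝ × ℝ, (p.1 - p.2) ^ 2 ∂μ i := hI
    _ ≤ ∑ i, (mallowsDistSq (F i) (G i) + ε') := hsum_lt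
    _ = (∑ i, mallowsDistSq (F i) (G i)) + m * ε' := by
        rw [Finset.sum_add_distrib, Finset.sum_const, Finset.card_univ, Fintype.card_fin,
          nsmul_eq_mul]
    _ ≤ (∑ i, mallowsDistSq (F i) (G i)) + ε := by linarith
end
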